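/- Let N ≥ 2, β ∈ (0, N), g(x) ≥ c₂|x|^{-β} for |x| ≥ R₁ with c₂, R₁ > 0, d > 0, z(t) = (t,0,…,0), and R(t) > 0 defined by ∫_{B_{R(t)}(z(t))} g dx = d. Then R(t)/t → 0 as t → +∞, and consequently t - R(t) → +∞. -/

import Mathlib

open MeasureTheory Filter Topology

/-- If `g(x) ≥ c₂|x|^(-β)` for `|x| ≥ R₁` with `β ∈ (0,N)`, and `R(t)` is defined by
`∫_{B_{R(t)}((t,0,…,0))} g = d`, then `R(t)/t → 0` and `t - R(t) → +∞` as
`t → +∞`. -/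
theorem stmt_14 (N : ℕ) (hN : 2 ≤ N)
    (g : EuclideanSpace ℝ (Fin N) → ℝ) (hg0 : ∀ x, 0 < g x)
    (β R₁ c₂ : ℝ) (hβ : β ∈ Set.Ioo (0 : ℝ) (N : ℝ)) (hR₁ : 0 < R₁) (hc₂ : 0 < c₂)
    (hgb : ∀ x : EuclideanSpace ℝ (Fin N), R₁ ≤ ‖x‖ → g x ≥ c₂ * ‖x‖ ^ (-β))
    (d : ℝ) (hd : 0 < d)
    (z : ℝ → EuclideanSpace ℝ (Fin N))
    (hz : ∀ t, z t = EuclideanSpace.single (⟨0, by omega⟩ : Fin N) t)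
    (R : ℝ → ℝ) (hRpos : ∀ t, 0 < t → 0 < R t)
    (hRmeas : ∀ t, 0 < t → (∫ x in Metric.ball (z t) (R t), g x) = d) :
    Tendsto (fun t => R t / t) atTop (𝓝 0) ∧
    Tendsto (fun t => t - R t) atTop atTop := by
  obtain ⟨hβ0, hβN⟩ := hβ
  have hN0 : (0:ℝ) < N := lt_trans hβ0 hβN
  haveI : Nonempty (Fin N) := ⟨⟨0, by omega⟩⟩
  set v := (volume (Metric.ball (0 : EuclideanSpace ℝ (Fin N)) 1)).toReal with hv
  have hvpos : 0 < v := by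
    apply ENNReal.toReal_pos
    · exact (Metric.measure_ball_pos volume 0 one_pos).ne'
    · exact measure_ball_lt_top.ne
  set K := d / (c₂ * v) * 2 ^ β with hKdef
  have hKpos : 0 < K := by
    have : (0:ℝ) < (2:ℝ) ^ β := Real.rpow_pos_of_pos (by norm_num) _
    positivity
  set C := K ^ (1/(N:ℝ)) with hCdef
  have hCpos : 0 < C := Real.rpow_pos_of_pos hKpos _
  -- Core estimate
  have key : ∀ t, max (2*R₁) 1 ≤ t → min (R t) (t/2) ≤ C * t ^ (β/(N:ℝ)) := by
    intro t ht
    have ht1 : (1:ℝ) ≤ t := le_trans (le_max_right _ _) ht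
    have htpos : 0 < t := lt_of_lt_of_le one_pos ht1
    have htR₁ : 2*R₁ ≤ t := le_trans (le_max_left _ _) ht
    set r := min (R t) (t/2) with hr
    have hrpos : 0 < r := lt_min (hRpos t htpos) (by linarith)
    have hrle : r ≤ t/2 := min_le_right _ _
    have hInt : IntegrableOn g (Metric.ball (z t) (R t)) volume := by
      by_contra h
      have h2 := hRmeas t htpos
      rw [MeasureTheory.integral_undef h] at h2
      linarith
    have hsub : Metric.ball (z t) r ⊆ Metric.ball (z t) (R t) :=
      Metric.ball_subset_ball (min_le_left _ _)
    have hInt' : IntegrableOn g (Metric.ball (z t) r) volume := hInt.mono_set hsub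
    have hnormz : ‖z t‖ = t := by
      rw [hz t, EuclideanSpace.norm_single, Real.norm_eq_abs, abs_of_nonneg (by linarith)]
    have h2t : (0:ℝ) < 2*t := by linarith
    have hlow : ∀ x ∈ Metric.ball (z t) r, c₂ * (2*t) ^ (-β) ≤ g x := by
      intro x hx
      rw [Metric.mem_ball, dist_eq_norm] at hx
      have e1 : ‖z t‖ - ‖x‖ ≤ ‖x - z t‖ := by
        have := norm_sub_norm_le (z t) x
        rwa [norm_sub_rev] at this
      have e2 : ‖x‖ ≤ ‖z t‖ + ‖x - z t‖ := by
        have := norm_add_le (z t) (x - z t)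
        simpa using this
      have hxlow : t/2 ≤ ‖x‖ := by rw [hnormz] at e1; linarith
      have hxup : ‖x‖ ≤ 2*t := by rw [hnormz] at e2; linarith
      have h1 : R₁ ≤ ‖x‖ := by linarith
      have h2 := hgb x h1
      have h3 : (2*t) ^ (-β) ≤ ‖x‖ ^ (-β) :=
        Real.rpow_le_rpow_of_nonpos (by linarith) hxup (by linarith)
      calc c₂ * (2*t) ^ (-β) ≤ c₂ * ‖x‖ ^ (-β) :=
            mul_le_mul_of_nonneg_left h3 hc₂.le
        _ ≤ g x := h2
    have hmeasr : (volume (Metric.ball (z t) r)).toReal = r^N * v := by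
      rw [Measure.addHaar_ball volume (z t) hrpos.le, ENNReal.toReal_mul,
        ENNReal.toReal_ofReal (by positivity), finrank_euclideanSpace_fin]
    have hball := setIntegral_ge_of_const_le measurableSet_ball
      measure_ball_lt_top.ne hlow hInt'
    rw [measureReal_def, hmeasr, smul_eq_mul, mul_comm (r^N * v)] at hball
    have hle_d : (∫ x in Metric.ball (z t) r, g x) ≤ d := by
      rw [← hRmeas t htpos]
      exact setIntegral_mono_set hInt (ae_of_all _ fun x => (hg0 x).le)
        (HasSubset.Subset.eventuallyLE hsub)
    have hmain : c₂ * (2*t) ^ (-β) * (r^N * v) ≤ d := le_trans hball hle_d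
    -- deduce r^N ≤ K * t^β
    set A := (2:ℝ)^β * t^β with hA
    have hApos : 0 < A := by
      have h2 : (0:ℝ) < (2:ℝ)^β := Real.rpow_pos_of_pos (by norm_num) _
      have h3 : (0:ℝ) < t^β := Real.rpow_pos_of_pos htpos _
      positivity
    have eA : (2*t) ^ (-β) = A⁻¹ := by
      rw [hA, Real.rpow_neg h2t.le, Real.mul_rpow (by norm_num) htpos.le]
    rw [eA] at hmain
    have hrN : r^N ≤ K * t ^ β := by
      rw [hKdef, div_mul_eq_mul_div, div_mul_eq_mul_div, mul_assoc,
        le_div_iff₀ (by positivity : (0:ℝ) < c₂ * v)]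
      have h2 := mul_le_mul_of_nonneg_right hmain hApos.le
      have h3 : c₂ * A⁻¹ * (r^N * v) * A = r^N * (c₂ * v) := by
        field_simp
      rw [h3] at h2
      rw [hA] at h2
      linarith
    calc r = (r^N) ^ (1/(N:ℝ)) := by
          rw [← Real.rpow_natCast r N, ← Real.rpow_mul hrpos.le, mul_one_div,
            div_self hN0.ne', Real.rpow_one]
      _ ≤ (K * t^β) ^ (1/(N:ℝ)) :=
          Real.rpow_le_rpow (by positivity) hrN (by positivity)
      _ = C * t ^ (β/(N:ℝ)) := by
          rw [Real.mul_rpow hKpos.le (Real.rpow_nonneg htpos.le _), hCdef,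
            ← Real.rpow_mul htpos.le, mul_one_div]
  -- the comparison function tends to 0
  have hlim : Tendsto (fun t : ℝ => C * t ^ (β/(N:ℝ) - 1)) atTop (𝓝 0) := by
    have hneg : 0 < 1 - β/(N:ℝ) := by
      have : β/(N:ℝ) < 1 := (div_lt_one hN0).2 hβN
      linarith
    have h0 := tendsto_rpow_neg_atTop hneg
    have h1 : Tendsto (fun t : ℝ => t ^ (β/(N:ℝ) - 1)) atTop (𝓝 0) := by
      convert h0 using 2 with t
      ring_nf
    simpa using h1.const_mul C
  have hsm : ∀ᶠ t in atTop, C * t ^ (β/(N:ℝ)) < t/2 := by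
    filter_upwards [hlim.eventually_lt_const (by norm_num : (0:ℝ) < 1/2),
      eventually_gt_atTop (0:ℝ)] with t h1 h2
    have e : C * t ^ (β/(N:ℝ)) = C * t ^ (β/(N:ℝ) - 1) * t := by
      rw [mul_assoc, ← Real.rpow_add_one h2.ne', sub_add_cancel]
    rw [e]
    nlinarith
  have hR_le : ∀ᶠ t in atTop, R t ≤ C * t ^ (β/(N:ℝ)) := by
    filter_upwards [hsm, eventually_ge_atTop (max (2*R₁) 1)] with t h1 h2
    have h3 := key t h2
    rcases le_or_gt (R t) (t/2) with h | h
    · rwa [min_eq_left h] at h3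
    · rw [min_eq_right h.le] at h3; linarith
  constructor
  · apply squeeze_zero' (g := fun t : ℝ => C * t ^ (β/(N:ℝ) - 1)) ?_ ?_ hlim
    · filter_upwards [eventually_gt_atTop (0:ℝ)] with t ht
      exact div_nonneg (hRpos t ht).le ht.le
    · filter_upwards [hR_le, eventually_gt_atTop (0:ℝ)] with t h1 ht
      rw [div_le_iff₀ ht]
      calc R t ≤ C * t ^ (β/(N:ℝ)) := h1
        _ = C * t ^ (β/(N:ℝ) - 1) * t := by
            rw [mul_assoc, ← Real.rpow_add_one ht.ne', sub_add_cancel]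
  · apply tendsto_atTop_mono' atTop (f₁ := fun t : ℝ => t/2)
    · filter_upwards [hR_le, hsm] with t h1 h2
      have : R t < t/2 := lt_of_le_of_lt h1 h2
      show t/2 ≤ t - R t
      linarith
    · exact tendsto_id.atTop_div_const (by norm_num)
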